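/- The naive weight w(t) = T(t)σ(t) with σ(t) = φ_s(-c(t-t*)) attains its local maximum at a point t̄ with t̄ < t* (the maximum occurs strictly before the surface intersection). -/

import Mathlib

open Real Filter MeasureTheory

/-- The sigmoid function `Φ_s(x) = (1 + e^{-sx})⁻¹`. -/
noncomputable def Phi (s x : ℝ) : ℝ := (1 + Real.exp (-s * x))⁻¹

/-- The logistic density `φ_s(x) = s e^{-sx} / (1 + e^{-sx})²`. -/
noncomputable def phi (s x : ℝ) : ℝ :=
  s * Real.exp (-s * x) / (1 + Real.exp (-s * x)) ^ 2

set_option maxHeartbeats 1000000 in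
/-- The naive weight `w = T σ` with `σ(t) = φ_s(-c(t - t*))` attains a local
maximum at some point strictly before the surface intersection `t*`. -/
theorem naive_weight_max_before_surface (s c tstar : ℝ) (hs : 0 < s) (hc : 0 < c)
    (htstar : 0 < tstar)
    (σ T w : ℝ → ℝ)
    (hσ : σ = fun t => phi s (-c * (t - tstar)))
    (hT : T = fun t => Real.exp (-(∫ u in (0 : ℝ)..t, σ u)))
    (hw : w = fun t => T t * σ t) :
    ∃ tbar, tbar < tstar ∧ IsLocalMax w tbar := by
  subst hw hT hσ
  set k := s * c with hk
  have hk0 : 0 < k := mul_pos hs hc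
  set E : ℝ → ℝ := fun t => Real.exp (k * (t - tstar)) with hEdef
  have hEpos : ∀ t, 0 < E t := fun t => Real.exp_pos _
  have hden : ∀ t, (0:ℝ) < 1 + E t := fun t => by positivity
  -- closed form for σ
  have hσeq : ∀ t, phi s (-c * (t - tstar)) = s * E t / (1 + E t) ^ 2 := by
    intro t
    have h1 : -s * (-c * (t - tstar)) = k * (t - tstar) := by rw [hk]; ring
    rw [phi, h1]
  set σf : ℝ → ℝ := fun t => s * E t / (1 + E t) ^ 2 with hσfdef
  have hfun : (fun t => phi s (-c * (t - tstar))) = σf := funext hσeq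
  rw [hfun]
  -- derivative facts
  have hE' : ∀ t, HasDerivAt E (k * E t) t := by
    intro t
    have h1 : HasDerivAt (fun t : ℝ => k * (t - tstar)) k t := by
      simpa using ((hasDerivAt_id t).sub_const tstar).const_mul k
    simpa [mul_comm] using h1.exp
  have hσ' : ∀ t, HasDerivAt σf (s * k * E t * (1 - E t) / (1 + E t) ^ 3) t := by
    intro t
    have hnum : HasDerivAt (fun t => s * E t) (s * (k * E t)) t := (hE' t).const_mul s
    have hden' : HasDerivAt (fun t => (1 + E t) ^ 2) (2 * (1 + E t) ^ 1 * (k * E t)) t :=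
      ((hE' t).const_add 1).pow 2
    have hne : (1 + E t) ^ 2 ≠ 0 := by positivity
    have := hnum.div hden' hne
    refine this.congr_deriv ?_
    rw [div_eq_div_iff (by positivity) (pow_pos (hden t) 3).ne']
    ring
  have hσcont : Continuous σf := by
    apply Continuous.div
    · exact continuous_const.mul (Real.continuous_exp.comp (by continuity))
    · exact ((continuous_const.add (Real.continuous_exp.comp (by continuity))).pow 2)
    · intro t; positivity
  -- derivative of w
  set F : ℝ → ℝ := fun t => ∫ u in (0:ℝ)..t, σf u with hFdef
  have hw' : ∀ t, HasDerivAt (fun t => Real.exp (-F t) * σf t)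
      (Real.exp (-F t) * (-σf t) * σf t +
        Real.exp (-F t) * (s * k * E t * (1 - E t) / (1 + E t) ^ 3)) t := by
    intro t
    have hF : HasDerivAt F (σf t) t := (hσcont.integral_hasStrictDerivAt 0 t).hasDerivAt
    have hT' : HasDerivAt (fun t => Real.exp (-F t)) (Real.exp (-F t) * (-σf t)) t :=
      hF.neg.exp
    exact hT'.mul (hσ' t)
  -- the root E0
  set q := Real.sqrt (1 + 4 * c ^ 2) with hqdef
  have hq2 : q ^ 2 = 1 + 4 * c ^ 2 := Real.sq_sqrt (by positivity)
  have hq0 : 0 ≤ q := Real.sqrt_nonneg _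
  have hq1 : 1 < q := by nlinarith
  have hqlt : q < 1 + 2 * c := by nlinarith
  set E0 := (q - 1) / (2 * c) with hE0def
  have hE0pos : 0 < E0 := by apply div_pos <;> linarith
  have hE0lt1 : E0 < 1 := by rw [div_lt_one (by linarith)]; linarith
  have hroot : c * (1 - E0 ^ 2) - E0 = 0 := by
    rw [hE0def]
    field_simp
    nlinarith [hq2]
  -- tbar
  set tbar := tstar + Real.log E0 / k with htbardef
  have hEtbar : E tbar = E0 := by
    simp only [hEdef, htbardef, add_sub_cancel_left]
    rw [mul_div_cancel₀ _ (ne_of_gt hk0), Real.exp_log hE0pos]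
  have htbarlt : tbar < tstar := by
    have hlog : Real.log E0 < 0 := Real.log_neg hE0pos hE0lt1
    have h2 : Real.log E0 / k < 0 := div_neg_of_neg_of_pos hlog hk0
    rw [htbardef]
    linarith
  refine ⟨tbar, htbarlt, ?_⟩
  -- sign of derivative
  have hderiv_eq : ∀ t, Real.exp (-F t) * (-σf t) * σf t +
      Real.exp (-F t) * (s * k * E t * (1 - E t) / (1 + E t) ^ 3) =
      Real.exp (-F t) * (s ^ 2 * E t / (1 + E t) ^ 4) * (c * (1 - E t ^ 2) - E t) := by
    intro t
    have hne : (1 + E t) ≠ 0 := ne_of_gt (hden t)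
    rw [hσfdef, hk]
    field_simp
    ring
  have hEmono : ∀ ⦃t1 t2 : ℝ⦄, t1 < t2 → E t1 < E t2 := by
    intro t1 t2 h
    exact Real.exp_lt_exp.2 (by nlinarith)
  have hsign_pos : ∀ t < tbar, 0 < c * (1 - E t ^ 2) - E t := by
    intro t ht
    have h1 : E t < E0 := hEtbar ▸ hEmono ht
    have expand : c * (1 - E t ^ 2) - E t =
        (E0 - E t) * (c * (E0 + E t) + 1) + (c * (1 - E0 ^ 2) - E0) := by ring
    rw [expand, hroot, add_zero]
    have h2 := hEpos t
    have h3 : 0 < c * (E0 + E t) + 1 := by nlinarith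
    exact mul_pos (by linarith) h3
  have hsign_neg : ∀ t, tbar < t → c * (1 - E t ^ 2) - E t < 0 := by
    intro t ht
    have h1 : E0 < E t := hEtbar ▸ hEmono ht
    have expand : c * (1 - E t ^ 2) - E t =
        (E0 - E t) * (c * (E0 + E t) + 1) + (c * (1 - E0 ^ 2) - E0) := by ring
    rw [expand, hroot, add_zero]
    have h2 := hEpos t
    have h3 : 0 < c * (E0 + E t) + 1 := by nlinarith
    exact mul_neg_of_neg_of_pos (by linarith) h3
  -- monotonicity
  have hwdiff : ∀ t, DifferentiableAt ℝ (fun t => Real.exp (-F t) * σf t) t :=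
    fun t => (hw' t).differentiableAt
  have hwcont : Continuous (fun t => Real.exp (-F t) * σf t) :=
    continuous_iff_continuousAt.2 fun t => (hwdiff t).continuousAt
  have hmono : StrictMonoOn (fun t => Real.exp (-F t) * σf t) (Set.Iic tbar) := by
    apply strictMonoOn_of_deriv_pos (convex_Iic tbar) hwcont.continuousOn
    intro x hx
    rw [interior_Iic] at hx
    rw [(hw' x).deriv, hderiv_eq x]
    have h3 := hsign_pos x hx
    have h1 : 0 < Real.exp (-F x) := Real.exp_pos _
    have h2 : 0 < s ^ 2 * E x / (1 + E x) ^ 4 := by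
      have := hEpos x
      positivity
    exact mul_pos (mul_pos h1 h2) h3
  have hanti : StrictAntiOn (fun t => Real.exp (-F t) * σf t) (Set.Ici tbar) := by
    apply strictAntiOn_of_deriv_neg (convex_Ici tbar) hwcont.continuousOn
    intro x hx
    rw [interior_Ici] at hx
    rw [(hw' x).deriv, hderiv_eq x]
    have h3 := hsign_neg x hx
    have h1 : 0 < Real.exp (-F x) := Real.exp_pos _
    have h2 : 0 < s ^ 2 * E x / (1 + E x) ^ 4 := by
      have := hEpos x
      positivity
    exact mul_neg_of_pos_of_neg (mul_pos h1 h2) h3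
  -- global max
  apply Filter.Eventually.of_forall
  intro x
  rcases lt_trichotomy x tbar with h | h | h
  · exact le_of_lt (hmono (Set.mem_Iic.2 h.le) (Set.mem_Iic.2 le_rfl) h)
  · rw [h]
  · exact le_of_lt (hanti (Set.mem_Ici.2 le_rfl) (Set.mem_Ici.2 h.le) h)
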